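/- Let a > b > 0, r = a*b/(a+b), and k = 1 + 2*a*b/(a+b)². For any triangle P₁P₂P₃ with all vertices on the ellipse x²/a² + y²/b² = 1, whose three side lines each have distance exactly r from the origin, and whose interior contains the origin, the cosines c₁, c₂ of the interior angles at P₁ and P₂ satisfy the implicit cubic relation 2·c₁·c₂·(c₁ + c₂) − 2·(c₁² + c₂²) − 2·(k+1)·c₁·c₂ + 2·k·(c₁ + c₂) + 1 − k² = 0. -/

import Mathlib

open EuclideanGeometry Metric
open scoped RealInnerProductSpace

lemma dist0_sq (x : EuclideanSpace ℝ (Fin 2)) : dist 0 x ^ 2 = x 0 ^ 2 + x 1 ^ 2 := by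
  rw [EuclideanSpace.dist_eq, Real.sq_sqrt (by positivity)]
  simp [Fin.sum_univ_two, Real.dist_eq, sq_abs]

lemma cross_sq_of_infDist (p q : EuclideanSpace ℝ (Fin 2)) (hpq : p ≠ q) (r : ℝ)
    (hd : Metric.infDist 0 (affineSpan ℝ {p, q} : Set (EuclideanSpace ℝ (Fin 2))) = r) :
    (p 0 * q 1 - p 1 * q 0) ^ 2 = r ^ 2 * ((p 0 - q 0) ^ 2 + (p 1 - q 1) ^ 2) := by
  have happ : ∀ (t : ℝ) (i : Fin 2), (t • (q - p) + p) i = t * (q i - p i) + p i := by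
    intro t i
    simp [PiLp.smul_apply, PiLp.add_apply, PiLp.sub_apply, smul_eq_mul]
  obtain ⟨A, hAdef⟩ : ∃ A : ℝ, A = (q 0 - p 0) ^ 2 + (q 1 - p 1) ^ 2 := ⟨_, rfl⟩
  have hA : 0 < A := by
    rw [hAdef]
    rcases (em (q 0 - p 0 = 0)) with h0 | h0
    · rcases (em (q 1 - p 1 = 0)) with h1 | h1
      · exfalso; apply hpq; ext i; fin_cases i
        · simpa [eq_comm] using sub_eq_zero.mp h0
        · simpa [eq_comm] using sub_eq_zero.mp h1
      · positivity
    · positivity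
  obtain ⟨B, hBdef⟩ : ∃ B : ℝ, B = p 0 * (q 0 - p 0) + p 1 * (q 1 - p 1) := ⟨_, rfl⟩
  obtain ⟨t0, ht0⟩ : ∃ t0 : ℝ, t0 = -B / A := ⟨_, rfl⟩
  obtain ⟨m, hm⟩ : ∃ m : EuclideanSpace ℝ (Fin 2), m = t0 • (q - p) + p := ⟨_, rfl⟩
  have hf : ∀ t : ℝ, dist 0 (t • (q - p) + p) ^ 2 = A * t ^ 2 + 2 * B * t + (p 0 ^ 2 + p 1 ^ 2) := by
    intro t
    rw [dist0_sq, happ, happ, hAdef, hBdef]; ring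
  have hmmem : m ∈ (affineSpan ℝ {p, q} : Set (EuclideanSpace ℝ (Fin 2))) := by
    have := smul_vsub_vadd_mem_affineSpan_pair t0 p q
    simpa [hm, vsub_eq_sub, vadd_eq_add] using this
  have hge : ∀ x ∈ (affineSpan ℝ {p, q} : Set (EuclideanSpace ℝ (Fin 2))), dist 0 m ≤ dist 0 x := by
    intro x hx
    have hx2 : (x - p) +ᵥ p ∈ line[ℝ, p, q] := by
      simpa using hx
    rw [vadd_left_mem_affineSpan_pair] at hx2
    obtain ⟨t, ht⟩ := hx2
    have hx' : x = t • (q - p) + p := by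
      rw [vsub_eq_sub] at ht
      rw [ht]; abel
    have e1 := hf t
    have e2 := hf t0
    have hsq : dist 0 m ^ 2 ≤ dist 0 x ^ 2 := by
      rw [hx', hm, e1, e2]
      have key : A * t ^ 2 + 2 * B * t - (A * t0 ^ 2 + 2 * B * t0) = A * (t + B / A) ^ 2 := by
        rw [ht0]; field_simp; ring
      have hpos : 0 ≤ A * (t + B / A) ^ 2 := by positivity
      linarith [key, hpos]
    nlinarith [dist_nonneg (x := (0 : EuclideanSpace ℝ (Fin 2))) (y := m),
      dist_nonneg (x := (0 : EuclideanSpace ℝ (Fin 2))) (y := x)]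
  have hr : r = dist 0 m := by
    rw [← hd]
    apply le_antisymm
    · exact infDist_le_dist_of_mem hmmem
    · by_contra hcon
      push_neg at hcon
      rw [infDist_lt_iff ⟨p, by
        exact SetLike.mem_coe.mpr (left_mem_affineSpan_pair ℝ p q)⟩] at hcon
      obtain ⟨y, hy, hylt⟩ := hcon
      exact absurd hylt (not_lt.mpr (hge y hy))
  have hr2 : r ^ 2 = A * t0 ^ 2 + 2 * B * t0 + (p 0 ^ 2 + p 1 ^ 2) := by
    rw [hr, ← hf t0, hm]
  have hfin : r ^ 2 * A = (p 0 ^ 2 + p 1 ^ 2) * A - B ^ 2 := by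
    rw [hr2, ht0]; field_simp; ring
  have lagr : (p 0 ^ 2 + p 1 ^ 2) * A - B ^ 2 = (p 0 * q 1 - p 1 * q 0) ^ 2 := by
    rw [hAdef, hBdef]; ring
  have : (p 0 - q 0) ^ 2 + (p 1 - q 1) ^ 2 = A := by rw [hAdef]; ring
  rw [this, ← lagr, ← hfin]
  try ring

lemma distsq_coord (u v : EuclideanSpace ℝ (Fin 2)) :
    dist u v ^ 2 = (u 0 - v 0) ^ 2 + (u 1 - v 1) ^ 2 := by
  rw [EuclideanSpace.dist_eq, Real.sq_sqrt (by positivity)]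
  simp [Fin.sum_univ_two, Real.dist_eq, sq_abs]

lemma hull_weights (P₁ P₂ P₃ : EuclideanSpace ℝ (Fin 2))
    (h0 : (0 : EuclideanSpace ℝ (Fin 2)) ∈ convexHull ℝ ({P₁, P₂, P₃} : Set (EuclideanSpace ℝ (Fin 2)))) :
    ∃ w₁ w₂ w₃ : ℝ, 0 ≤ w₁ ∧ 0 ≤ w₂ ∧ 0 ≤ w₃ ∧ w₁ + w₂ + w₃ = 1 ∧
      w₁ • P₁ + w₂ • P₂ + w₃ • P₃ = 0 ∧
      ((w₁ = 0 → (0:EuclideanSpace ℝ (Fin 2)) ∈ segment ℝ P₂ P₃) ∧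
       (w₂ = 0 → (0:EuclideanSpace ℝ (Fin 2)) ∈ segment ℝ P₁ P₃) ∧
       (w₃ = 0 → (0:EuclideanSpace ℝ (Fin 2)) ∈ segment ℝ P₁ P₂)) := by
  rw [show ({P₁, P₂, P₃} : Set (EuclideanSpace ℝ (Fin 2))) = insert P₁ {P₂, P₃} from rfl,
    convexHull_insert ⟨P₂, by simp⟩, convexJoin_singleton_left] at h0
  simp only [Set.mem_iUnion] at h0
  obtain ⟨z, hz, hseg⟩ := h0
  rw [convexHull_pair] at hz
  obtain ⟨α, β, hα, hβ, hαβ, hz'⟩ := hz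
  obtain ⟨γ, δ, hγ, hδ, hγδ, h0'⟩ := hseg
  refine ⟨γ, δ * α, δ * β, hγ, by positivity, by positivity, by nlinarith, ?_, ?_, ?_, ?_⟩
  · rw [← h0', ← hz']
    module
  · intro hw1
    -- γ = 0, so δ = 1, 0 = z ∈ segment P₂ P₃
    have hδ1 : δ = 1 := by linarith [hw1 ▸ hγδ]
    have : (0:EuclideanSpace ℝ (Fin 2)) = z := by
      rw [← h0', hw1, hδ1]; simp
    rw [this, ← hz']
    exact ⟨α, β, hα, hβ, hαβ, rfl⟩
  · intro hw2
    rcases mul_eq_zero.mp hw2 with hδ0 | hα0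
    · -- δ = 0 ⇒ γ = 1 ⇒ 0 = P₁ ∈ segment P₁ P₃
      have hγ1 : γ = 1 := by linarith [hγδ]
      have : (0:EuclideanSpace ℝ (Fin 2)) = P₁ := by
        rw [← h0', hδ0, hγ1]; simp
      rw [this]
      exact left_mem_segment ℝ P₁ P₃
    · -- α = 0 ⇒ β = 1 ⇒ z = P₃, 0 ∈ segment P₁ P₃
      have hβ1 : β = 1 := by linarith [hαβ]
      have hzP3 : z = P₃ := by rw [← hz', hα0, hβ1]; simp
      exact ⟨γ, δ, hγ, hδ, hγδ, by rw [← hzP3]; exact h0'⟩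
  · intro hw3
    rcases mul_eq_zero.mp hw3 with hδ0 | hβ0
    · have hγ1 : γ = 1 := by linarith [hγδ]
      have : (0:EuclideanSpace ℝ (Fin 2)) = P₁ := by
        rw [← h0', hδ0, hγ1]; simp
      rw [this]
      exact left_mem_segment ℝ P₁ P₂
    · have hα1 : α = 1 := by linarith [hαβ]
      have hzP2 : z = P₂ := by rw [← hz', hβ0, hα1]; simp
      exact ⟨γ, δ, hγ, hδ, hγδ, by rw [← hzP2]; exact h0'⟩


lemma pick_pos {L u : ℝ} (hL : 0 < L) (hu : 0 < u) (hfac : (L - u) * (L + u) = 0) : L = u := by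
  rcases mul_eq_zero.mp hfac with h | h
  · linarith
  · exfalso; linarith

lemma pick_neg {L u : ℝ} (hL : 0 < L) (hu : u < 0) (hfac : (L - u) * (L + u) = 0) : L = -u := by
  rcases mul_eq_zero.mp hfac with h | h
  · exfalso; linarith
  · linarith

set_option maxHeartbeats 2000000 in
/-- For `a > b > 0`, `r = ab/(a+b)`, `k = 1 + 2ab/(a+b)²`: the cosines `c₁, c₂`
of the interior angles at `P₁` and `P₂` of any triangle of the incircle family
(vertices on the ellipse `x²/a² + y²/b² = 1`, side lines at distance `r` from
the origin, origin in the interior) satisfy the implicit cubic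
`2c₁c₂(c₁+c₂) - 2(c₁²+c₂²) - 2(k+1)c₁c₂ + 2k(c₁+c₂) + 1 - k² = 0`. -/
theorem incircle_family_cubic (a b : ℝ) (hb : 0 < b) (hab : b < a)
    (r k : ℝ) (hr : r = a * b / (a + b)) (hk : k = 1 + 2 * a * b / (a + b) ^ 2)
    (P₁ P₂ P₃ : EuclideanSpace ℝ (Fin 2))
    (hind : AffineIndependent ℝ ![P₁, P₂, P₃])
    (hE₁ : (P₁ 0) ^ 2 / a ^ 2 + (P₁ 1) ^ 2 / b ^ 2 = 1)
    (hE₂ : (P₂ 0) ^ 2 / a ^ 2 + (P₂ 1) ^ 2 / b ^ 2 = 1)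
    (hE₃ : (P₃ 0) ^ 2 / a ^ 2 + (P₃ 1) ^ 2 / b ^ 2 = 1)
    (hd₁ : Metric.infDist 0 (affineSpan ℝ {P₁, P₂} : Set (EuclideanSpace ℝ (Fin 2))) = r)
    (hd₂ : Metric.infDist 0 (affineSpan ℝ {P₂, P₃} : Set (EuclideanSpace ℝ (Fin 2))) = r)
    (hd₃ : Metric.infDist 0 (affineSpan ℝ {P₃, P₁} : Set (EuclideanSpace ℝ (Fin 2))) = r)
    (h0 : (0 : EuclideanSpace ℝ (Fin 2)) ∈
      interior (convexHull ℝ ({P₁, P₂, P₃} : Set (EuclideanSpace ℝ (Fin 2)))))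
    (c₁ c₂ : ℝ) (hc₁ : c₁ = Real.cos (∠ P₂ P₁ P₃)) (hc₂ : c₂ = Real.cos (∠ P₁ P₂ P₃)) :
    2 * c₁ * c₂ * (c₁ + c₂) - 2 * (c₁ ^ 2 + c₂ ^ 2) - 2 * (k + 1) * c₁ * c₂ +
      2 * k * (c₁ + c₂) + 1 - k ^ 2 = 0 := by
  have ha : 0 < a := lt_trans hb hab
  have hapb : 0 < a + b := by linarith
  have hane : a ≠ 0 := ne_of_gt ha
  have hbne : b ≠ 0 := ne_of_gt hb
  have habne : a + b ≠ 0 := ne_of_gt hapb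
  have hrpos : 0 < r := by rw [hr]; positivity
  have hr' : r * (a + b) = a * b := by rw [hr]; field_simp
  have hk' : k * (a+b)^2 = (a+b)^2 + 2*a*b := by rw [hk]; field_simp; try ring
  -- distinctness
  have hne12 : P₁ ≠ P₂ := by
    intro h
    have := hind.injective (a₁ := 0) (a₂ := 1) (by simpa using h)
    exact absurd this (by decide)
  have hne23 : P₂ ≠ P₃ := by
    intro h
    have := hind.injective (a₁ := 1) (a₂ := 2) (by simpa using h)
    exact absurd this (by decide)
  have hne31 : P₃ ≠ P₁ := by
    intro h
    have := hind.injective (a₁ := 2) (a₂ := 0) (by simpa using h)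
    exact absurd this (by decide)
  -- normalized coordinates
  obtain ⟨c1, s1, hx1, hy1⟩ : ∃ u v : ℝ, P₁ 0 = a * u ∧ P₁ 1 = b * v :=
    ⟨P₁ 0 / a, P₁ 1 / b, by field_simp, by field_simp⟩
  obtain ⟨c2, s2, hx2, hy2⟩ : ∃ u v : ℝ, P₂ 0 = a * u ∧ P₂ 1 = b * v :=
    ⟨P₂ 0 / a, P₂ 1 / b, by field_simp, by field_simp⟩
  obtain ⟨c3, s3, hx3, hy3⟩ : ∃ u v : ℝ, P₃ 0 = a * u ∧ P₃ 1 = b * v :=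
    ⟨P₃ 0 / a, P₃ 1 / b, by field_simp, by field_simp⟩
  have he1 : c1^2 + s1^2 = 1 := by
    rw [hx1, hy1] at hE₁; field_simp at hE₁
    have hcan : a^2*b^2*(c1^2 + s1^2) = a^2*b^2*1 := by linear_combination a^2*b^2*hE₁
    exact mul_left_cancel₀ (by positivity) hcan
  have he2 : c2^2 + s2^2 = 1 := by
    rw [hx2, hy2] at hE₂; field_simp at hE₂
    have hcan : a^2*b^2*(c2^2 + s2^2) = a^2*b^2*1 := by linear_combination a^2*b^2*hE₂
    exact mul_left_cancel₀ (by positivity) hcan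
  have he3 : c3^2 + s3^2 = 1 := by
    rw [hx3, hy3] at hE₃; field_simp at hE₃
    have hcan : a^2*b^2*(c3^2 + s3^2) = a^2*b^2*1 := by linear_combination a^2*b^2*hE₃
    exact mul_left_cancel₀ (by positivity) hcan
  -- squared tangency conditions in normalized coordinates
  have hcr12 := cross_sq_of_infDist P₁ P₂ hne12 r hd₁
  have hcr23 := cross_sq_of_infDist P₂ P₃ hne23 r hd₂
  have hcr31 := cross_sq_of_infDist P₃ P₁ hne31 r hd₃
  rw [hx1, hy1, hx2, hy2] at hcr12
  rw [hx2, hy2, hx3, hy3] at hcr23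
  rw [hx3, hy3, hx1, hy1] at hcr31
  have hSZ : (a+b)^2*(c1*s2 - s1*c2)^2 = a^2*(c1-c2)^2 + b^2*(s1-s2)^2 := by
    have hcan : a^2*b^2*((a+b)^2*(c1*s2 - s1*c2)^2) = a^2*b^2*(a^2*(c1-c2)^2 + b^2*(s1-s2)^2) := by
      linear_combination (a+b)^2*hcr12 + ((a^2*(c1-c2)^2 + b^2*(s1-s2)^2)*(r*(a+b)+a*b))*hr'
    exact mul_left_cancel₀ (by positivity) hcan
  have hSX : (a+b)^2*(c2*s3 - s2*c3)^2 = a^2*(c2-c3)^2 + b^2*(s2-s3)^2 := by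
    have hcan : a^2*b^2*((a+b)^2*(c2*s3 - s2*c3)^2) = a^2*b^2*(a^2*(c2-c3)^2 + b^2*(s2-s3)^2) := by
      linear_combination (a+b)^2*hcr23 + ((a^2*(c2-c3)^2 + b^2*(s2-s3)^2)*(r*(a+b)+a*b))*hr'
    exact mul_left_cancel₀ (by positivity) hcan
  have hSY : (a+b)^2*(c3*s1 - s3*c1)^2 = a^2*(c3-c1)^2 + b^2*(s3-s1)^2 := by
    have hcan : a^2*b^2*((a+b)^2*(c3*s1 - s3*c1)^2) = a^2*b^2*(a^2*(c3-c1)^2 + b^2*(s3-s1)^2) := by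
      linear_combination (a+b)^2*hcr31 + ((a^2*(c3-c1)^2 + b^2*(s3-s1)^2)*(r*(a+b)+a*b))*hr'
    exact mul_left_cancel₀ (by positivity) hcan
  -- the squared-distance positivity per pair
  have hnz12 : 0 < (c1-c2)^2 + (s1-s2)^2 := by
    rcases eq_or_ne c1 c2 with h | h
    · rcases eq_or_ne s1 s2 with h' | h'
      · exfalso
        apply hne12
        ext i
        fin_cases i
        · show P₁ 0 = P₂ 0
          rw [hx1, hx2, h]
        · show P₁ 1 = P₂ 1
          rw [hy1, hy2, h']
      · have : (s1 - s2) ≠ 0 := sub_ne_zero.mpr h'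
        positivity
    · have : (c1 - c2) ≠ 0 := sub_ne_zero.mpr h
      positivity
  have hnz23 : 0 < (c2-c3)^2 + (s2-s3)^2 := by
    rcases eq_or_ne c2 c3 with h | h
    · rcases eq_or_ne s2 s3 with h' | h'
      · exfalso
        apply hne23
        ext ii
        fin_cases ii
        · show P₂ 0 = P₃ 0
          rw [hx2, hx3, h]
        · show P₂ 1 = P₃ 1
          rw [hy2, hy3, h']
      · have : (s2 - s3) ≠ 0 := sub_ne_zero.mpr h'
        positivity
    · have : (c2 - c3) ≠ 0 := sub_ne_zero.mpr h
      positivity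
  have hnz31 : 0 < (c3-c1)^2 + (s3-s1)^2 := by
    rcases eq_or_ne c3 c1 with h | h
    · rcases eq_or_ne s3 s1 with h' | h'
      · exfalso
        apply hne31
        ext ii
        fin_cases ii
        · show P₃ 0 = P₁ 0
          rw [hx3, hx1, h]
        · show P₃ 1 = P₁ 1
          rw [hy3, hy1, h']
      · have : (s3 - s1) ≠ 0 := sub_ne_zero.mpr h'
        positivity
    · have : (c3 - c1) ≠ 0 := sub_ne_zero.mpr h
      positivity
  -- tangency (linear form)
  have ht12 : ((a+b)*(a*(c1*c2) + b*(s1*s2)) + a*b) = 0 := by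
    have hfac : ((a+b)*(a*(c1*c2) + b*(s1*s2)) + a*b) * ((c1-c2)^2 + (s1-s2)^2) = 0 := by
      linear_combination hSZ - (b^2*s2^2 - b^2*s1*s2 - a*b + 2*a*b*s2^2 + 2*a*b*c2^2 - a*b*s1*s2 - a*b*c1*c2 - a^2 + a^2*s2^2 + 2*a^2*c2^2 - a^2*c1*c2)*he1 - (-b^2*s1*s2 + b^2*s1^2 + a*b - a*b*s1*s2 - a*b*c1*c2 + a^2 - a^2*s1^2 - a^2*c1*c2)*he2
    rcases mul_eq_zero.mp hfac with h | h
    · exact h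
    · exact absurd h (ne_of_gt hnz12)
  have ht23 : ((a+b)*(a*(c2*c3) + b*(s2*s3)) + a*b) = 0 := by
    have hfac : ((a+b)*(a*(c2*c3) + b*(s2*s3)) + a*b) * ((c2-c3)^2 + (s2-s3)^2) = 0 := by
      linear_combination hSX - (b^2*s3^2 - b^2*s2*s3 - a*b + 2*a*b*s3^2 + 2*a*b*c3^2 - a*b*s2*s3 - a*b*c2*c3 - a^2 + a^2*s3^2 + 2*a^2*c3^2 - a^2*c2*c3)*he2 - (-b^2*s2*s3 + b^2*s2^2 + a*b - a*b*s2*s3 - a*b*c2*c3 + a^2 - a^2*s2^2 - a^2*c2*c3)*he3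
    rcases mul_eq_zero.mp hfac with h | h
    · exact h
    · exact absurd h (ne_of_gt hnz23)
  have ht13 : ((a+b)*(a*(c1*c3) + b*(s1*s3)) + a*b) = 0 := by
    have hfac : ((a+b)*(a*(c1*c3) + b*(s1*s3)) + a*b) * ((c3-c1)^2 + (s3-s1)^2) = 0 := by
      linear_combination hSY - (-b^2*s1*s3 + b^2*s1^2 - a*b - a*b*s1*s3 + 2*a*b*s1^2 - a*b*c1*c3 + 2*a*b*c1^2 - a^2 + a^2*s1^2 - a^2*c1*c3 + 2*a^2*c1^2)*he3 - (b^2*s3^2 - b^2*s1*s3 + a*b - a*b*s1*s3 - a*b*c1*c3 + a^2 - a^2*s3^2 - a^2*c1*c3)*he1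
    rcases mul_eq_zero.mp hfac with h | h
    · exact h
    · exact absurd h (ne_of_gt hnz31)
  -- side lengths
  obtain ⟨L1, hL1def⟩ : ∃ L : ℝ, L = dist P₂ P₃ := ⟨_, rfl⟩
  obtain ⟨L2, hL2def⟩ : ∃ L : ℝ, L = dist P₁ P₃ := ⟨_, rfl⟩
  obtain ⟨L3, hL3def⟩ : ∃ L : ℝ, L = dist P₁ P₂ := ⟨_, rfl⟩
  have hL1pos : 0 < L1 := by rw [hL1def]; exact dist_pos.mpr hne23
  have hL2pos : 0 < L2 := by rw [hL2def]; exact dist_pos.mpr (Ne.symm hne31)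
  have hL3pos : 0 < L3 := by rw [hL3def]; exact dist_pos.mpr hne12
  have hL1sq : L1^2 = (a+b)^2*(c2*s3 - s2*c3)^2 := by
    rw [hL1def, distsq_coord]
    rw [hx2, hy2, hx3, hy3]
    linear_combination hSX.symm
  have hL2sq : L2^2 = (a+b)^2*(c3*s1 - s3*c1)^2 := by
    rw [hL2def, distsq_coord]
    rw [hx1, hy1, hx3, hy3]
    linear_combination hSY.symm
  have hL3sq : L3^2 = (a+b)^2*(c1*s2 - s1*c2)^2 := by
    rw [hL3def, distsq_coord]
    rw [hx1, hy1, hx2, hy2]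
    linear_combination hSZ.symm
  -- nonvanishing of X, Y, Z
  have hXne : (c2*s3 - s2*c3) ≠ 0 := by
    intro h
    have : L1^2 = 0 := by rw [hL1sq, h]; ring
    exact absurd this (by positivity)
  have hYne : (c3*s1 - s3*c1) ≠ 0 := by
    intro h
    have : L2^2 = 0 := by rw [hL2sq, h]; ring
    exact absurd this (by positivity)
  have hZne : (c1*s2 - s1*c2) ≠ 0 := by
    intro h
    have : L3^2 = 0 := by rw [hL3sq, h]; ring
    exact absurd this (by positivity)
  have hX2pos : 0 < (c2*s3 - s2*c3)^2 := lt_of_le_of_ne (sq_nonneg _) (fun h => hXne (pow_eq_zero_iff (n := 2) (by norm_num) |>.mp h.symm))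
  have hY2pos : 0 < (c3*s1 - s3*c1)^2 := lt_of_le_of_ne (sq_nonneg _) (fun h => hYne (pow_eq_zero_iff (n := 2) (by norm_num) |>.mp h.symm))
  -- convex hull weights and same-sign of the crosses
  obtain ⟨w1, w2, w3, hw1, hw2, hw3, hwsum, hwcomb, hseg1, hseg2, hseg3⟩ :=
    hull_weights P₁ P₂ P₃ (interior_subset h0)
  have hw1pos : 0 < w1 := by
    rcases hw1.lt_or_eq with h | h
    · exact h
    · exfalso
      have h0seg := hseg1 h.symm
      have : (0 : EuclideanSpace ℝ (Fin 2)) ∈ (affineSpan ℝ {P₂, P₃} : Set (EuclideanSpace ℝ (Fin 2))) := by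
        apply convexHull_subset_affineSpan
        rw [convexHull_pair]; exact h0seg
      rw [Metric.infDist_zero_of_mem this] at hd₂
      exact absurd hd₂.symm (ne_of_gt hrpos)
  have hw2pos : 0 < w2 := by
    rcases hw2.lt_or_eq with h | h
    · exact h
    · exfalso
      have h0seg := hseg2 h.symm
      have : (0 : EuclideanSpace ℝ (Fin 2)) ∈ (affineSpan ℝ {P₃, P₁} : Set (EuclideanSpace ℝ (Fin 2))) := by
        apply convexHull_subset_affineSpan
        rw [Set.pair_comm P₃ P₁, convexHull_pair]
        exact ⟨(h0seg.choose), h0seg.choose_spec.choose, h0seg.choose_spec.choose_spec.1,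
          h0seg.choose_spec.choose_spec.2.1, h0seg.choose_spec.choose_spec.2.2.1,
          h0seg.choose_spec.choose_spec.2.2.2⟩
      rw [Metric.infDist_zero_of_mem this] at hd₃
      exact absurd hd₃.symm (ne_of_gt hrpos)
  have hw3pos : 0 < w3 := by
    rcases hw3.lt_or_eq with h | h
    · exact h
    · exfalso
      have h0seg := hseg3 h.symm
      have : (0 : EuclideanSpace ℝ (Fin 2)) ∈ (affineSpan ℝ {P₁, P₂} : Set (EuclideanSpace ℝ (Fin 2))) := by
        apply convexHull_subset_affineSpan
        rw [convexHull_pair]; exact h0seg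
      rw [Metric.infDist_zero_of_mem this] at hd₁
      exact absurd hd₁.symm (ne_of_gt hrpos)
  have hcombx : w1*c1 + w2*c2 + w3*c3 = 0 := by
    have h := congrArg (fun f : EuclideanSpace ℝ (Fin 2) => f 0) hwcomb
    simp only [PiLp.add_apply, PiLp.smul_apply, smul_eq_mul, PiLp.zero_apply] at h
    rw [hx1, hx2, hx3] at h
    have : a * (w1*c1 + w2*c2 + w3*c3) = 0 := by linear_combination h
    exact (mul_eq_zero.mp this).resolve_left hane
  have hcomby : w1*s1 + w2*s2 + w3*s3 = 0 := by
    have h := congrArg (fun f : EuclideanSpace ℝ (Fin 2) => f 1) hwcomb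
    simp only [PiLp.add_apply, PiLp.smul_apply, smul_eq_mul, PiLp.zero_apply] at h
    rw [hy1, hy2, hy3] at h
    have : b * (w1*s1 + w2*s2 + w3*s3) = 0 := by linear_combination h
    exact (mul_eq_zero.mp this).resolve_left hbne
  have hZX : w1 * (c1*s2 - s1*c2) = w3 * (c2*s3 - s2*c3) := by
    linear_combination s2*hcombx - c2*hcomby
  have hYX : w2 * (c2*s3 - s2*c3) = w1 * (c3*s1 - s3*c1) := by
    linear_combination s3*hcombx - c3*hcomby
  have hXZpos : 0 < (c2*s3 - s2*c3) * (c1*s2 - s1*c2) := by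
    have key : w1 * ((c2*s3 - s2*c3) * (c1*s2 - s1*c2)) = w3 * (c2*s3 - s2*c3)^2 := by linear_combination (c2*s3 - s2*c3)*hZX
    have hq : (c2*s3 - s2*c3) * (c1*s2 - s1*c2) = w3 * (c2*s3 - s2*c3)^2 / w1 := by
      rw [eq_div_iff (ne_of_gt hw1pos)]
      linear_combination key
    rw [hq]
    exact div_pos (mul_pos hw3pos hX2pos) hw1pos
  have hXYpos : 0 < (c2*s3 - s2*c3) * (c3*s1 - s3*c1) := by
    have key : w2 * ((c2*s3 - s2*c3) * (c3*s1 - s3*c1)) = w1 * (c3*s1 - s3*c1)^2 := by linear_combination (c3*s1 - s3*c1)*hYX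
    have hq : (c2*s3 - s2*c3) * (c3*s1 - s3*c1) = w1 * (c3*s1 - s3*c1)^2 / w2 := by
      rw [eq_div_iff (ne_of_gt hw2pos)]
      linear_combination key
    rw [hq]
    exact div_pos (mul_pos hw1pos hY2pos) hw2pos
  -- chain of algebraic identities
  have hA41 : a*b*((c2*s3 - s2*c3) + (c3*s1 - s3*c1) + (c1*s2 - s1*c2)) = (c2*s3 - s2*c3) * (a*b + (a+b)*(a*c1^2 + b*s1^2)) := by
    linear_combination (c3*s1 - s3*c1)*ht12 + (c1*s2 - s1*c2)*ht13
  have hA42 : a*b*((c2*s3 - s2*c3) + (c3*s1 - s3*c1) + (c1*s2 - s1*c2)) = (c3*s1 - s3*c1) * (a*b + (a+b)*(a*c2^2 + b*s2^2)) := by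
    linear_combination (c2*s3 - s2*c3)*ht12 + (c1*s2 - s1*c2)*ht23
  have hA43 : a*b*((c2*s3 - s2*c3) + (c3*s1 - s3*c1) + (c1*s2 - s1*c2)) = (c1*s2 - s1*c2) * (a*b + (a+b)*(a*c3^2 + b*s3^2)) := by
    linear_combination (c2*s3 - s2*c3)*ht13 + (c3*s1 - s3*c1)*ht23
  have hA2 : a*b*(a+b)^2*(c1*s2 - s1*c2)^2 = (a+b)^2*(a*c1^2 + b*s1^2)*(a*c2^2 + b*s2^2) - a^2*b^2 := by
    linear_combination (-((a+b)*(a*(c1*c2) + b*(s1*s2)) - a*b))*ht12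
  have hA3 : (a+b)^3*((a*c1^2 + b*s1^2)*(a*c2^2 + b*s2^2)*(a*c3^2 + b*s3^2)) = a^2*b^2*(a+b)*((a*c1^2 + b*s1^2)+(a*c2^2 + b*s2^2)+(a*c3^2 + b*s3^2)) + 2*a^3*b^3 := by
    linear_combination ((a+b)*(a*c1^2 + b*s1^2)*(((a+b)*(a*(c2*c3) + b*(s2*s3)) + a*b) - 2*a*b) - 2*((a+b)*(a*(c1*c3) + b*(s1*s3)) + a*b)*((a+b)*(a*(c1*c2) + b*(s1*s2)) + a*b) + 2*a*b*((a+b)*(a*(c1*c3) + b*(s1*s3)) + a*b) + 2*a*b*((a+b)*(a*(c1*c2) + b*(s1*s2)) + a*b) - 2*a^2*b^2)*ht23 + ((a+b)*(a*c2^2 + b*s2^2)*(((a+b)*(a*(c1*c3) + b*(s1*s3)) + a*b) - 2*a*b) + 2*a*b*((a+b)*(a*(c1*c2) + b*(s1*s2)) + a*b) - 2*a^2*b^2)*ht13 + ((a+b)*(a*c3^2 + b*s3^2)*(((a+b)*(a*(c1*c2) + b*(s1*s2)) + a*b) - 2*a*b) - 2*a^2*b^2)*ht12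
  have hGG : (a*b + (a+b)*(a*c1^2 + b*s1^2))*(a*b + (a+b)*(a*c2^2 + b*s2^2)) = (a+b)^2*(c1*s2 - s1*c2)^2*(a*b + (a+b)*(a*c3^2 + b*s3^2)) := by
    have hcan : a*b*((a*b + (a+b)*(a*c1^2 + b*s1^2))*(a*b + (a+b)*(a*c2^2 + b*s2^2))) = a*b*((a+b)^2*(c1*s2 - s1*c2)^2*(a*b + (a+b)*(a*c3^2 + b*s3^2))) := by
      linear_combination (-1)*hA3 - (a*b + (a+b)*(a*c3^2 + b*s3^2))*hA2
    exact mul_left_cancel₀ (by positivity) hcan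
  have hG1pos : (0:ℝ) < (a*b + (a+b)*(a*c1^2 + b*s1^2)) := by positivity
  have hSigne : a*b*((c2*s3 - s2*c3) + (c3*s1 - s3*c1) + (c1*s2 - s1*c2)) ≠ 0 := by
    rw [hA41]
    exact mul_ne_zero hXne (ne_of_gt hG1pos)
  have hkey : a*b*((c2*s3 - s2*c3) + (c3*s1 - s3*c1) + (c1*s2 - s1*c2)) = (a+b)^2*((c2*s3 - s2*c3)*(c3*s1 - s3*c1)*(c1*s2 - s1*c2)) := by
    apply mul_right_cancel₀ hSigne
    linear_combination (a*b*((c2*s3 - s2*c3) + (c3*s1 - s3*c1) + (c1*s2 - s1*c2)))*hA41 + ((c2*s3 - s2*c3)*(a*b + (a+b)*(a*c1^2 + b*s1^2)))*hA42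
      + ((c2*s3 - s2*c3)*(c3*s1 - s3*c1))*hGG - ((a+b)^2*((c2*s3 - s2*c3)*(c3*s1 - s3*c1)*(c1*s2 - s1*c2)))*hA43
  -- sign analysis and the relation ab*(L1+L2+L3) = L1*L2*L3
  have hfac1 : (L1 - (a+b)*(c2*s3 - s2*c3)) * (L1 + (a+b)*(c2*s3 - s2*c3)) = 0 := by linear_combination hL1sq
  have hfac2 : (L2 - (a+b)*(c3*s1 - s3*c1)) * (L2 + (a+b)*(c3*s1 - s3*c1)) = 0 := by linear_combination hL2sq
  have hfac3 : (L3 - (a+b)*(c1*s2 - s1*c2)) * (L3 + (a+b)*(c1*s2 - s1*c2)) = 0 := by linear_combination hL3sq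
  have hR1 : a*b*(L1 + L2 + L3) = L1*L2*L3 := by
    rcases mul_pos_iff.mp hXYpos with ⟨hXpos, hYpos⟩ | ⟨hXneg, hYneg⟩
    · have hZpos : 0 < (c1*s2 - s1*c2) := by
        rcases mul_pos_iff.mp hXZpos with ⟨_, h⟩ | ⟨h, _⟩
        · exact h
        · exact absurd h (not_lt.mpr hXpos.le)
      have hL1eq := pick_pos hL1pos (mul_pos hapb hXpos) hfac1
      have hL2eq := pick_pos hL2pos (mul_pos hapb hYpos) hfac2
      have hL3eq := pick_pos hL3pos (mul_pos hapb hZpos) hfac3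
      rw [hL1eq, hL2eq, hL3eq]
      linear_combination (a+b)*hkey
    · have hZneg : (c1*s2 - s1*c2) < 0 := by
        rcases mul_pos_iff.mp hXZpos with ⟨h, _⟩ | ⟨_, h⟩
        · exact absurd h (not_lt.mpr hXneg.le)
        · exact h
      have hL1eq := pick_neg hL1pos (mul_neg_of_pos_of_neg hapb hXneg) hfac1
      have hL2eq := pick_neg hL2pos (mul_neg_of_pos_of_neg hapb hYneg) hfac2
      have hL3eq := pick_neg hL3pos (mul_neg_of_pos_of_neg hapb hZneg) hfac3
      rw [hL1eq, hL2eq, hL3eq]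
      linear_combination (-(a+b))*hkey
  -- the quartic identity
  have hQ : 2*((c2*s3 - s2*c3)^2*(c3*s1 - s3*c1)^2 + (c3*s1 - s3*c1)^2*(c1*s2 - s1*c2)^2 + (c1*s2 - s1*c2)^2*(c2*s3 - s2*c3)^2) - ((c2*s3 - s2*c3)^4 + (c3*s1 - s3*c1)^4 + (c1*s2 - s1*c2)^4)
      = 4*((c2*s3 - s2*c3)^2*((c3*s1 - s3*c1)^2*((c1*s2 - s1*c2)^2))) := by
    linear_combination (-s3^4 + 2*s2^2*s3^2 + 2*s2^2*c3^2*s3^2 - s2^4 + 2*s2^4*c3^2 - 4*s2^4*c3^2*s3^2 - 4*c2*s2*c3*s3^3 - 4*c2*s2^3*c3*s3 + 8*c2*s2^3*c3*s3^3 + 2*c2^2*s3^4 + 2*c2^2*s2^2*s3^2 - 4*c2^2*s2^2*s3^4 + s1^2*s3^4 - 6*s1^2*c3^2*s3^2 - 2*s1^2*s2^2*s3^2 + 2*s1^2*s2^2*c3^2 + s1^2*s2^4 + 4*s1^2*s2^4*c3^2*s3^2 - 4*s1^2*s2^4*c3^4 + 8*s1^2*c2*s2*c3*s3 - 8*s1^2*c2*s2^3*c3*s3^3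 - 8*s1^2*c2*s2^3*c3^3*s3 + 2*s1^2*c2^2*s3^2 - 6*s1^2*c2^2*s2^2 + 4*s1^2*c2^2*s2^2*s3^4 + 24*s1^2*c2^2*s2^2*c3^2*s3^2 - 8*s1^2*c2^3*s2*c3*s3^3 - 4*s1^2*c2^4*s3^4 + 4*c1*s1*c3*s3^3 - 4*c1*s1*s2^2*c3*s3 + 8*c1*s1*s2^4*c3^3*s3 - 4*c1*s1*c2*s2*s3^2 + 4*c1*s1*c2*s2^3 - 8*c1*s1*c2*s2^3*c3^2*s3^2 - 8*c1*s1*c2^2*s2^2*c3*s3^3 + 8*c1*s1*c2^3*s2*s3^4 - c1^2*s3^4 + 2*c1^2*s2^2*s3^2 - c1^2*s2^4 - 4*c1^2*s2^4*c3^2*s3^2 + 8*c1^2*c2*s2^3*c3*s3^3 - 4*c1^2*c2^2*s2^2*s3^4)*he1 + (s3^4 + 2*s2^2*s3^2 - 3*s2^2*s3^4 - 6*s2^2*c3^2*s3^2 + 4*c2*s2*c3*s3^3 - c2^2*s3^4 + 4*s1^2*s3^2 - 6*s1^2*s3^4 + 2*s1^2*c3^2*s3^2 - 6*s1^2*s2^2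 - 4*s1^2*s2^2*s3^2 + 12*s1^2*s2^2*s3^4 + 2*s1^2*s2^2*c3^2 + 24*s1^2*s2^2*c3^2*s3^2 - 4*s1^2*c2*s2*c3*s3 - 8*s1^2*c2*s2*c3*s3^3 + 2*s1^2*c2^2*s3^2 - 4*s1^2*c2^2*s3^4 - s1^4 - 2*s1^4*s3^2 + 4*s1^4*s3^4 + 2*s1^4*c3^2 - 4*s1^4*c3^2*s3^2 + 7*s1^4*s2^2 - 8*s1^4*s2^2*s3^4 - 20*s1^4*s2^2*c3^2*s3^2 - 4*s1^4*s2^2*c3^4 + 8*s1^4*c2*s2*c3*s3^3 + 8*s1^4*c2*s2*c3^3*s3 - s1^4*c2^2 + 4*s1^4*c2^2*s3^4 - 4*s1^4*c2^2*c3^2*s3^2 - 4*c1*s1*c3*s3^3 + 8*c1*s1*s2^2*c3*s3 - 8*c1*s1*s2^2*c3*s3^3 - 4*c1*s1*c2*s2*s3^2 + 8*c1*s1*c2*s2*s3^4 - 4*c1*s1^3*c3*s3 + 8*c1*s1^3*c3*s3^3 - 8*c1*s1^3*s2^2*c3^3*s3 + 4*c1*s1^3*c2*s2 - 8*c1*s1^3*c2*s2*s3^4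 - 8*c1*s1^3*c2*s2*c3^2*s3^2 + 8*c1*s1^3*c2^2*c3*s3^3)*he2 + (-4*s2^2*s3^2 + s2^4 + 3*s2^4*s3^2 - s2^4*c3^2 + 4*c2*s2^3*c3*s3 - 4*s1^2*s3^2 + 6*s1^2*s2^2 + 18*s1^2*s2^2*s3^2 + 2*s1^2*s2^2*c3^2 - 8*s1^2*s2^4 - 12*s1^2*s2^4*s3^2 - 4*s1^2*s2^4*c3^2 - 4*s1^2*c2*s2*c3*s3 - 8*s1^2*c2*s2^3*c3*s3 + s1^4 + 3*s1^4*s3^2 - s1^4*c3^2 - 8*s1^4*s2^2 - 12*s1^4*s2^2*s3^2 - 4*s1^4*s2^2*c3^2 + 8*s1^4*s2^4 + 8*s1^4*s2^4*s3^2 + 8*s1^4*s2^4*c3^2 + 8*s1^4*c2*s2*c3*s3 - 4*c1*s1*s2^2*c3*s3 + 8*c1*s1*s2^4*c3*s3 + 8*c1*s1*c2*s2*s3^2 - 4*c1*s1*c2*s2^3 - 8*c1*s1*c2*s2^3*s3^2 + 4*c1*s1^3*c3*s3 - 8*c1*s1^3*s2^2*c3*s3 - 4*c1*s1^3*c2*s2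 - 8*c1*s1^3*c2*s2*s3^2 + 8*c1*s1^3*c2*s2^3 + 8*c1*s1^3*c2*s2^3*s3^2 + 8*c1*s1^3*c2*s2^3*c3^2)*he3
  have hR2 : (a+b)^2*(2*(L1^2*L2^2 + L2^2*L3^2 + L3^2*L1^2) - (L1^4 + L2^4 + L3^4))
      = 4*(L1^2*(L2^2*(L3^2))) := by
    linear_combination (-4*L2^2*L3^2 + 2*b^2*L3^2 + 2*b^2*L2^2 - b^2*L1^2 - b^4*s2^2*c3^2 + 2*b^4*c2*s2*c3*s3 - b^4*c2^2*s3^2 + 4*a*b*L3^2 + 4*a*b*L2^2 - 2*a*b*L1^2 - 4*a*b^3*s2^2*c3^2 + 8*a*b^3*c2*s2*c3*s3 - 4*a*b^3*c2^2*s3^2 + 2*a^2*L3^2 + 2*a^2*L2^2 - a^2*L1^2 - 6*a^2*b^2*s2^2*c3^2 + 12*a^2*b^2*c2*s2*c3*s3 - 6*a^2*b^2*c2^2*s3^2 - 4*a^3*b*s2^2*c3^2 + 8*a^3*b*c2*s2*c3*s3 - 4*a^3*b*c2^2*s3^2 - a^4*s2^2*c3^2 + 2*a^4*c2*s2*c3*s3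 - a^4*c2^2*s3^2)*hL1sq + (2*b^2*L3^2 - b^2*L2^2 - 4*b^2*s2^2*c3^2*L3^2 + 8*b^2*c2*s2*c3*s3*L3^2 - 4*b^2*c2^2*s3^2*L3^2 + 2*b^4*s2^2*c3^2 - 4*b^4*c2*s2*c3*s3 + 2*b^4*c2^2*s3^2 - b^4*s1^2*c3^2 + 2*b^4*c1*s1*c3*s3 - b^4*c1^2*s3^2 + 4*a*b*L3^2 - 2*a*b*L2^2 - 8*a*b*s2^2*c3^2*L3^2 + 16*a*b*c2*s2*c3*s3*L3^2 - 8*a*b*c2^2*s3^2*L3^2 + 8*a*b^3*s2^2*c3^2 - 16*a*b^3*c2*s2*c3*s3 + 8*a*b^3*c2^2*s3^2 - 4*a*b^3*s1^2*c3^2 + 8*a*b^3*c1*s1*c3*s3 - 4*a*b^3*c1^2*s3^2 + 2*a^2*L3^2 - a^2*L2^2 - 4*a^2*s2^2*c3^2*L3^2 + 8*a^2*c2*s2*c3*s3*L3^2 - 4*a^2*c2^2*s3^2*L3^2 + 12*a^2*b^2*s2^2*c3^2 - 24*a^2*b^2*c2*s2*c3*s3 + 12*a^2*b^2*c2^2*s3^2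 - 6*a^2*b^2*s1^2*c3^2 + 12*a^2*b^2*c1*s1*c3*s3 - 6*a^2*b^2*c1^2*s3^2 + 8*a^3*b*s2^2*c3^2 - 16*a^3*b*c2*s2*c3*s3 + 8*a^3*b*c2^2*s3^2 - 4*a^3*b*s1^2*c3^2 + 8*a^3*b*c1*s1*c3*s3 - 4*a^3*b*c1^2*s3^2 + 2*a^4*s2^2*c3^2 - 4*a^4*c2*s2*c3*s3 + 2*a^4*c2^2*s3^2 - a^4*s1^2*c3^2 + 2*a^4*c1*s1*c3*s3 - a^4*c1^2*s3^2)*hL2sq + (-b^2*L3^2 + 2*b^4*s2^2*c3^2 - 4*b^4*c2*s2*c3*s3 + 2*b^4*c2^2*s3^2 + 2*b^4*s1^2*c3^2 - 4*b^4*s1^2*s2^2*c3^4 + 8*b^4*s1^2*c2*s2*c3^3*s3 - b^4*s1^2*c2^2 - 4*b^4*s1^2*c2^2*c3^2*s3^2 - 4*b^4*c1*s1*c3*s3 + 8*b^4*c1*s1*s2^2*c3^3*s3 + 2*b^4*c1*s1*c2*s2 - 16*b^4*c1*s1*c2*s2*c3^2*s3^2 + 8*b^4*c1*s1*c2^2*c3*s3^3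 + 2*b^4*c1^2*s3^2 - b^4*c1^2*s2^2 - 4*b^4*c1^2*s2^2*c3^2*s3^2 + 8*b^4*c1^2*c2*s2*c3*s3^3 - 4*b^4*c1^2*c2^2*s3^4 - 2*a*b*L3^2 + 8*a*b^3*s2^2*c3^2 - 16*a*b^3*c2*s2*c3*s3 + 8*a*b^3*c2^2*s3^2 + 8*a*b^3*s1^2*c3^2 - 16*a*b^3*s1^2*s2^2*c3^4 + 32*a*b^3*s1^2*c2*s2*c3^3*s3 - 4*a*b^3*s1^2*c2^2 - 16*a*b^3*s1^2*c2^2*c3^2*s3^2 - 16*a*b^3*c1*s1*c3*s3 + 32*a*b^3*c1*s1*s2^2*c3^3*s3 + 8*a*b^3*c1*s1*c2*s2 - 64*a*b^3*c1*s1*c2*s2*c3^2*s3^2 + 32*a*b^3*c1*s1*c2^2*c3*s3^3 + 8*a*b^3*c1^2*s3^2 - 4*a*b^3*c1^2*s2^2 - 16*a*b^3*c1^2*s2^2*c3^2*s3^2 + 32*a*b^3*c1^2*c2*s2*c3*s3^3 - 16*a*b^3*c1^2*c2^2*s3^4 - a^2*L3^2 + 12*a^2*b^2*s2^2*c3^2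 - 24*a^2*b^2*c2*s2*c3*s3 + 12*a^2*b^2*c2^2*s3^2 + 12*a^2*b^2*s1^2*c3^2 - 24*a^2*b^2*s1^2*s2^2*c3^4 + 48*a^2*b^2*s1^2*c2*s2*c3^3*s3 - 6*a^2*b^2*s1^2*c2^2 - 24*a^2*b^2*s1^2*c2^2*c3^2*s3^2 - 24*a^2*b^2*c1*s1*c3*s3 + 48*a^2*b^2*c1*s1*s2^2*c3^3*s3 + 12*a^2*b^2*c1*s1*c2*s2 - 96*a^2*b^2*c1*s1*c2*s2*c3^2*s3^2 + 48*a^2*b^2*c1*s1*c2^2*c3*s3^3 + 12*a^2*b^2*c1^2*s3^2 - 6*a^2*b^2*c1^2*s2^2 - 24*a^2*b^2*c1^2*s2^2*c3^2*s3^2 + 48*a^2*b^2*c1^2*c2*s2*c3*s3^3 - 24*a^2*b^2*c1^2*c2^2*s3^4 + 8*a^3*b*s2^2*c3^2 - 16*a^3*b*c2*s2*c3*s3 + 8*a^3*b*c2^2*s3^2 + 8*a^3*b*s1^2*c3^2 - 16*a^3*b*s1^2*s2^2*c3^4 + 32*a^3*b*s1^2*c2*s2*c3^3*s3 - 4*a^3*b*s1^2*c2^2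 - 16*a^3*b*s1^2*c2^2*c3^2*s3^2 - 16*a^3*b*c1*s1*c3*s3 + 32*a^3*b*c1*s1*s2^2*c3^3*s3 + 8*a^3*b*c1*s1*c2*s2 - 64*a^3*b*c1*s1*c2*s2*c3^2*s3^2 + 32*a^3*b*c1*s1*c2^2*c3*s3^3 + 8*a^3*b*c1^2*s3^2 - 4*a^3*b*c1^2*s2^2 - 16*a^3*b*c1^2*s2^2*c3^2*s3^2 + 32*a^3*b*c1^2*c2*s2*c3*s3^3 - 16*a^3*b*c1^2*c2^2*s3^4 + 2*a^4*s2^2*c3^2 - 4*a^4*c2*s2*c3*s3 + 2*a^4*c2^2*s3^2 + 2*a^4*s1^2*c3^2 - 4*a^4*s1^2*s2^2*c3^4 + 8*a^4*s1^2*c2*s2*c3^3*s3 - a^4*s1^2*c2^2 - 4*a^4*s1^2*c2^2*c3^2*s3^2 - 4*a^4*c1*s1*c3*s3 + 8*a^4*c1*s1*s2^2*c3^3*s3 + 2*a^4*c1*s1*c2*s2 - 16*a^4*c1*s1*c2*s2*c3^2*s3^2 + 8*a^4*c1*s1*c2^2*c3*s3^3 + 2*a^4*c1^2*s3^2 - a^4*c1^2*s2^2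 - 4*a^4*c1^2*s2^2*c3^2*s3^2 + 8*a^4*c1^2*c2*s2*c3*s3^3 - 4*a^4*c1^2*c2^2*s3^4)*hL3sq + (a+b)^6*hQ
  -- law of cosines
  have hc1L : 2*L3*L2*c₁ = L3^2 + L2^2 - L1^2 := by
    have h := EuclideanGeometry.law_cos P₂ P₁ P₃
    rw [← hc₁, dist_comm P₂ P₁, dist_comm P₃ P₁, ← hL1def, ← hL2def, ← hL3def] at h
    linear_combination h
  have hc2L : 2*L3*L1*c₂ = L3^2 + L1^2 - L2^2 := by
    have h := EuclideanGeometry.law_cos P₁ P₂ P₃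
    rw [← hc₂, dist_comm P₃ P₂, ← hL1def, ← hL2def, ← hL3def] at h
    linear_combination h
  obtain ⟨c₃, hc3L⟩ : ∃ u : ℝ, 2*L1*L2*u = L1^2 + L2^2 - L3^2 :=
    ⟨(L1^2 + L2^2 - L3^2)/(2*L1*L2), by field_simp⟩
  -- sum of cosines = k
  have hN : (L1*(L3^2+L2^2-L1^2) + L2*(L3^2+L1^2-L2^2) + L3*(L1^2+L2^2-L3^2))
      = 2*k*(L1*L2*L3) := by
    have hcan : (L1*(L3^2+L2^2-L1^2) + L2*(L3^2+L1^2-L2^2) + L3*(L1^2+L2^2-L3^2))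
        * ((L1+L2+L3)*(a+b)^2)
        = (2*k*(L1*L2*L3)) * ((L1+L2+L3)*(a+b)^2) := by
      linear_combination hR2 - 4*(L1*L2*L3)*hR1 - 2*(L1*L2*L3)*(L1+L2+L3)*hk'
    exact mul_right_cancel₀ (by positivity) hcan
  have hA : c₁ + c₂ + c₃ = k := by
    have hcan : (c₁ + c₂ + c₃) * (2*(L1*L2*L3)) = k * (2*(L1*L2*L3)) := by
      linear_combination L1*hc1L + L2*hc2L + L3*hc3L + hN
    exact mul_right_cancel₀ (by positivity) hcan
  have hB : c₁^2 + c₂^2 + c₃^2 + 2*c₁*c₂*c₃ = 1 := by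
    have hcan : (c₁^2 + c₂^2 + c₃^2 + 2*c₁*c₂*c₃) * (4*(L1*L2*L3)^2)
        = 1 * (4*(L1*L2*L3)^2) := by
      linear_combination
        (L1^2*(2*L3*L2*c₁ + (L3^2+L2^2-L1^2)) + (2*L3*L1*c₂)*(2*L1*L2*c₃))*hc1L
        + (L2^2*(2*L3*L1*c₂ + (L3^2+L1^2-L2^2)) + (L3^2+L2^2-L1^2)*(2*L1*L2*c₃))*hc2L
        + (L3^2*(2*L1*L2*c₃ + (L1^2+L2^2-L3^2)) + (L3^2+L2^2-L1^2)*(L3^2+L1^2-L2^2))*hc3L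
    exact mul_right_cancel₀ (by positivity) hcan
  linear_combination (-1:ℝ)*hB + (c₃ + k - c₁ - c₂ + 2*c₁*c₂)*hA
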